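/- arXiv:1607.01319 — 3 statements merged into one kernel-verified Lean document; each statement's English description precedes it below -/
import Mathlib

section
/- Let α ∈ k be nonzero and let A₀ and A₁ be the 3×3 matrices over k[x₀,x₁,x₂] with rows A₀ = ((0, x₁x₂, −x₁²), (−x₂, 0, x₀ + α⁻¹x₁), (x₁, −(x₀+α⁻¹x₁), 0)) and A₁ = ((0, x₀x₂, −x₀²), (−x₂, 0, αx₀ + x₁), (x₀, −(αx₀+x₁), 0)). Then g·A₁·h = A₀, where g = [[α³, α²x₀ − αx₁, α²x₂], [0, 1, 0], [0, 0, −α]] and h = [[1, 0, 0], [α⁻¹, −α⁻², 0], [0, 0, α⁻¹]]. Moreover det g = −α⁴ and det h = −α⁻³. -/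
open MvPolynomial Matrix

set_option maxHeartbeats 1000000 in
theorem transition_between_normal_forms (k : Type*) [Field k] (α : k) (hα : α ≠ 0) :
    let x0 : MvPolynomial (Fin 3) k := X 0
    let x1 : MvPolynomial (Fin 3) k := X 1
    let x2 : MvPolynomial (Fin 3) k := X 2
    let A0 : Matrix (Fin 3) (Fin 3) (MvPolynomial (Fin 3) k) :=
      !![0, x1 * x2, -(x1 * x1);
         -x2, 0, x0 + C α⁻¹ * x1;
         x1, -(x0 + C α⁻¹ * x1), 0]
    let A1 : Matrix (Fin 3) (Fin 3) (MvPolynomial (Fin 3) k) :=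
      !![0, x0 * x2, -(x0 * x0);
         -x2, 0, C α * x0 + x1;
         x0, -(C α * x0 + x1), 0]
    let g : Matrix (Fin 3) (Fin 3) (MvPolynomial (Fin 3) k) :=
      !![C (α ^ 3), C (α ^ 2) * x0 - C α * x1, C (α ^ 2) * x2;
         0, 1, 0;
         0, 0, -(C α)]
    let h : Matrix (Fin 3) (Fin 3) (MvPolynomial (Fin 3) k) :=
      !![1, 0, 0;
         C α⁻¹, -(C (α⁻¹ ^ 2)), 0;
         0, 0, C α⁻¹]
    g * A1 * h = A0 ∧ g.det = C (-(α ^ 4)) ∧ h.det = C (-(α⁻¹ ^ 3)) := by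
  intro x0 x1 x2 A0 A1 g h
  have hinv : (C α : MvPolynomial (Fin 3) k) * C α⁻¹ = 1 := by
    rw [← C_mul, mul_inv_cancel₀ hα, C_1]
  refine ⟨?_, ?_, ?_⟩
  · show g * A1 * h = A0
    refine Matrix.ext fun i j => ?_
    fin_cases i <;> fin_cases j <;>
      simp [A0, A1, g, h, Matrix.mul_apply, Fin.sum_univ_three, ← inv_pow, map_pow]
    · linear_combination (-(C α * x1 * x2)) * hinv
    · linear_combination (x1 * x2 * (C α * C α⁻¹ + 1)) * hinv
    · linear_combination (-(x1 * x1)) * hinv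
    · linear_combination (x0 : MvPolynomial (Fin 3) k) * hinv
    · linear_combination ((C α * x0 + x1) : MvPolynomial (Fin 3) k) * hinv
    · linear_combination (-(C α⁻¹ * x1 + x0 * (C α * C α⁻¹ + 1))) * hinv
  · show g.det = C (-(α ^ 4))
    simp [g, Matrix.det_fin_three, Matrix.vecHead, Matrix.vecTail, map_pow, map_neg]
    ring
  · show h.det = C (-(α⁻¹ ^ 3))
    simp [h, Matrix.det_fin_three, Matrix.vecHead, Matrix.vecTail]
    rw [← C_mul, ← mul_inv, ← pow_succ]
end

section
/- With A and f_{A,B} as above, for any point p = (p₀, p₁, p₂) ∈ k³ satisfying x₀(p) = 0 (i.e. p₀ = 0) and w(p) = 0 (i.e. γp₁ + δp₂ = 0), the polynomial f_{A,B} vanishes at p; i.e. every first-order deformation of det along A yields a quartic passing through the common zero of x₀ and w. -/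
open MvPolynomial Matrix

theorem fAB_vanishes_at_p (k : Type*) [Field k] (γ δ : k) (hγδ : (γ, δ) ≠ (0, 0))
    (B : Matrix (Fin 3) (Fin 3) (MvPolynomial (Fin 3) k))
    (p : Fin 3 → k) (hp0 : p 0 = 0) (hpw : γ * p 1 + δ * p 2 = 0) :
    let x0 : MvPolynomial (Fin 3) k := X 0
    let x1 : MvPolynomial (Fin 3) k := X 1
    let x2 : MvPolynomial (Fin 3) k := X 2
    let w : MvPolynomial (Fin 3) k := C γ * x1 + C δ * x2
    let a0 : Fin 3 → MvPolynomial (Fin 3) k := ![0, -x2 * w, x1 * w]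
    let a1 : Fin 3 → MvPolynomial (Fin 3) k := ![-x2, 0, x0]
    let a2 : Fin 3 → MvPolynomial (Fin 3) k := ![x1, -x0, 0]
    let fAB : MvPolynomial (Fin 3) k :=
      Matrix.det (Matrix.of ![B 0, a1, a2]) +
      Matrix.det (Matrix.of ![a0, B 1, a2]) +
      Matrix.det (Matrix.of ![a0, a1, B 2])
    MvPolynomial.eval p fAB = 0 := by
  intro x0 x1 x2 w a0 a1 a2 fAB
  simp only [fAB, a0, a1, a2, w, x0, x1, x2, Matrix.det_fin_three, Matrix.of_apply,
    Matrix.cons_val', Matrix.cons_val_zero, Matrix.cons_val_one, Matrix.head_cons,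
    Matrix.empty_val', Matrix.cons_val_fin_one, Matrix.head_fin_const,
    Matrix.cons_val_two, Matrix.tail_cons, _root_.map_add, _root_.map_mul, _root_.map_neg, _root_.map_sub,
    eval_X, eval_C, map_zero, hp0]
  ring_nf
  linear_combination (-(p 1 ^ 2 * eval p (B 1 1) + p 1 * p 2 * eval p (B 1 2) + p 1 * p 2 * eval p (B 2 1) + p 2 ^ 2 * eval p (B 2 2))) * hpw
end

section
/- If a = b = c = d = 0, then the linear form x̄₀ = x₀ + αx₁ + βx₂ divides each of the three maximal minors of the 2×3 matrix with rows (−x₂, cx₁, x̄₀) and (x₁, −x̄₀ + ax₁ + bx₂, dx₂); conversely, if the three maximal minors of this matrix have a common linear factor (a nonzero homogeneous degree-1 common divisor), then a = b = c = d = 0. -/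
open MvPolynomial

lemma rep3 (k : Type*) [Field k] (ℓ : MvPolynomial (Fin 3) k) (h : ℓ.IsHomogeneous 1) :
    ℓ = C (coeff (Finsupp.single 0 1) ℓ) * X 0 + C (coeff (Finsupp.single 1 1) ℓ) * X 1
      + C (coeff (Finsupp.single 2 1) ℓ) * X 2 := by
  ext m
  simp only [coeff_add, coeff_C_mul, coeff_X', mul_ite, mul_one, mul_zero]
  by_cases h0 : Finsupp.single (0 : Fin 3) 1 = m
  · subst h0; simp [Finsupp.single_eq_single_iff]
  by_cases h1 : Finsupp.single (1 : Fin 3) 1 = m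
  · subst h1; simp [Finsupp.single_eq_single_iff]
  by_cases h2 : Finsupp.single (2 : Fin 3) 1 = m
  · subst h2; simp [Finsupp.single_eq_single_iff]
  simp only [h0, h1, h2, if_false, add_zero, zero_add]
  refine h.coeff_eq_zero ?_
  intro hd
  have hdeg : m.degree = ∑ i : Fin 3, m i :=
    Finset.sum_subset (Finset.subset_univ _) (by simp +contextual [Finsupp.notMem_support_iff])
  rw [hdeg, Fin.sum_univ_three] at hd
  have hm : m = Finsupp.single 0 (m 0) + Finsupp.single 1 (m 1) + Finsupp.single 2 (m 2) := by
    ext i; fin_cases i <;> simp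
  rcases Nat.add_eq_one_iff.mp hd with ⟨h01, h2'⟩ | ⟨h01, h2'⟩
  · rcases Nat.add_eq_zero.mp h01 with ⟨ha, hb⟩
    exact absurd (by rw [hm, ha, hb, h2']; simp) (Ne.symm h2)
  · rcases Nat.add_eq_one_iff.mp h01 with ⟨ha, hb⟩ | ⟨ha, hb⟩
    · exact absurd (by rw [hm, ha, hb, h2']; simp) (Ne.symm h1)
    · exact absurd (by rw [hm, ha, hb, h2']; simp) (Ne.symm h0)

lemma aux_main (k : Type*) [Field k] (α β a b c d : k)
    (ℓ : MvPolynomial (Fin 3) k) (hne : ℓ ≠ 0) (hhom : ℓ.IsHomogeneous 1)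
    (hd1 : ℓ ∣ (-(C d) * X 2 ^ 2 - (X 0 + C α * X 1 + C β * X 2) * X 1))
    (hd2 : ℓ ∣ (X 2 * ((X 0 + C α * X 1 + C β * X 2) - C a * X 1 - C b * X 2) - C c * X 1 ^ 2)) :
    a = 0 ∧ b = 0 ∧ c = 0 ∧ d = 0 := by
  set l0 := coeff (Finsupp.single 0 1) ℓ with hl0def
  set l1 := coeff (Finsupp.single 1 1) ℓ with hl1def
  set l2 := coeff (Finsupp.single 2 1) ℓ with hl2def
  have hrep := rep3 k ℓ hhom
  obtain ⟨q1, hq1⟩ := hd1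
  obtain ⟨q2, hq2⟩ := hd2
  have hev : ∀ p0 p1 p2 : k, l0 * p0 + l1 * p1 + l2 * p2 = 0 →
      (d * p2 ^ 2 + (p0 + α * p1 + β * p2) * p1 = 0) ∧
      (p2 * ((p0 + α * p1 + β * p2) - a * p1 - b * p2) - c * p1 ^ 2 = 0) := by
    intro p0 p1 p2 hp
    have hℓ : eval ![p0, p1, p2] ℓ = 0 := by
      rw [hrep]
      simp only [map_add, map_mul, eval_C, eval_X]
      simpa using hp
    constructor
    · have h := congrArg (eval ![p0, p1, p2]) hq1
      rw [map_mul, hℓ, zero_mul] at h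
      simp only [map_sub, map_neg, map_mul, map_add, map_pow, eval_C, eval_X] at h
      simp only [Matrix.cons_val_zero, Matrix.cons_val_one, Matrix.head_cons,
        Matrix.cons_val_two, Matrix.tail_cons] at h
      linear_combination -h
    · have h := congrArg (eval ![p0, p1, p2]) hq2
      rw [map_mul, hℓ, zero_mul] at h
      simp only [map_sub, map_neg, map_mul, map_add, map_pow, eval_C, eval_X] at h
      simp only [Matrix.cons_val_zero, Matrix.cons_val_one, Matrix.head_cons,
        Matrix.cons_val_two, Matrix.tail_cons] at h
      linear_combination h
  by_cases hl0 : l0 = 0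
  · exfalso
    by_cases hl2 : l2 = 0
    · have hl1 : l1 ≠ 0 := by
        intro hl1
        exact hne (by rw [hrep, ← hl0def, ← hl1def, ← hl2def, hl0, hl1, hl2]; simp)
      have e1 := (hev 0 0 1 (by rw [hl0, hl2]; ring)).2
      have e2 := (hev 1 0 1 (by rw [hl0, hl2]; ring)).2
      have : (1 : k) = 0 := by linear_combination e2 - e1
      exact one_ne_zero this
    · have e1 := (hev 0 l2 (-l1) (by rw [hl0]; ring)).1
      have e2 := (hev 1 l2 (-l1) (by rw [hl0]; ring)).1
      have : l2 = 0 := by linear_combination e2 - e1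
      exact hl2 this
  · have E1a := (hev (-l1) l0 0 (by ring)).1
    have E2a := (hev (-l1) l0 0 (by ring)).2
    have E1b := (hev (-l2) 0 l0 (by ring)).1
    have E2b := (hev (-l2) 0 l0 (by ring)).2
    have E1c := (hev (-(l1 + l2)) l0 l0 (by ring)).1
    have E2c := (hev (-(l1 + l2)) l0 l0 (by ring)).2
    have hA : l1 = α * l0 := by
      have h : (α * l0 - l1) * l0 = 0 := by linear_combination E1a
      linear_combination -((mul_eq_zero.mp h).resolve_right hl0)
    have hd0 : d = 0 := by
      have h : d * (l0 * l0) = 0 := by linear_combination E1b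
      exact (mul_eq_zero.mp h).resolve_right (mul_ne_zero hl0 hl0)
    have hB : l2 = β * l0 := by
      have h : (β * l0 - l2) * l0 = 0 := by linear_combination E1c - E1b + hA * l0
      linear_combination -((mul_eq_zero.mp h).resolve_right hl0)
    have hc0 : c = 0 := by
      have h : c * (l0 * l0) = 0 := by linear_combination -E2a
      exact (mul_eq_zero.mp h).resolve_right (mul_ne_zero hl0 hl0)
    have hb0 : b = 0 := by
      have h : b * (l0 * l0) = 0 := by linear_combination -E2b - hB * l0
      exact (mul_eq_zero.mp h).resolve_right (mul_ne_zero hl0 hl0)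
    have ha0 : a = 0 := by
      have h : a * (l0 * l0) = 0 := by
        linear_combination -E2c - hc0 * (l0 * l0) - hb0 * (l0 * l0) - hA * l0 - hB * l0
      exact (mul_eq_zero.mp h).resolve_right (mul_ne_zero hl0 hl0)
    exact ⟨ha0, hb0, hc0, hd0⟩

theorem Nprime_equations (k : Type*) [Field k] [IsAlgClosed k] [CharZero k]
    (α β a b c d : k) :
    let x0 : MvPolynomial (Fin 3) k := X 0
    let x1 : MvPolynomial (Fin 3) k := X 1
    let x2 : MvPolynomial (Fin 3) k := X 2
    let xb : MvPolynomial (Fin 3) k := x0 + C α * x1 + C β * x2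
    let m0 : MvPolynomial (Fin 3) k :=
      C c * C d * (x1 * x2) + xb * (xb - C a * x1 - C b * x2)
    let m1 : MvPolynomial (Fin 3) k := -(C d) * x2 ^ 2 - xb * x1
    let m2 : MvPolynomial (Fin 3) k :=
      x2 * (xb - C a * x1 - C b * x2) - C c * x1 ^ 2
    ((a = 0 ∧ b = 0 ∧ c = 0 ∧ d = 0) → (xb ∣ m0 ∧ xb ∣ m1 ∧ xb ∣ m2)) ∧
    ((∃ ℓ : MvPolynomial (Fin 3) k, ℓ ≠ 0 ∧ ℓ.IsHomogeneous 1 ∧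
        ℓ ∣ m0 ∧ ℓ ∣ m1 ∧ ℓ ∣ m2) → (a = 0 ∧ b = 0 ∧ c = 0 ∧ d = 0)) := by
  intro x0 x1 x2 xb m0 m1 m2
  constructor
  · rintro ⟨ha, hb, hc, hd⟩
    subst ha; subst hb; subst hc; subst hd
    refine ⟨⟨xb, ?_⟩, ⟨-x1, ?_⟩, ⟨x2, ?_⟩⟩ <;>
      · show _ = _
        simp only [x0, x1, x2, xb, m0, m1, m2, map_zero]
        ring
  · rintro ⟨ℓ, h1, h2, _, h4, h5⟩
    exact aux_main k α β a b c d ℓ h1 h2 h4 h5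
end
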